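/- Let q = 2^m and γ ∈ F_q. Then f(X) = X + γ·Tr_{F_{q^3}/F_q}(X^{2q+1} + X^{4q+1}) is a permutation of F_{q^3} if and only if γ = 0, or (γ = 1 and m is odd). -/

import Mathlib

open Finset
set_option linter.unusedSectionVars false
set_option linter.unnecessarySimpa false
set_option maxHeartbeats 1000000

section Fside
variable {F : Type*} [Field F] [Fintype F]

lemma two_eq_zero (m : ℕ) (hm : 0 < m) (hF : Fintype.card F = 2 ^ m) : (2 : F) = 0 := by
  have h := FiniteField.cast_card_eq_zero F
  rw [hF] at h
  push_cast at h
  exact pow_eq_zero_iff hm.ne' |>.mp h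

variable (h2 : (2 : F) = 0)
include h2

lemma sq_inj {a b : F} (h : a ^ 2 = b ^ 2) : a = b := by
  have h0 : (a - b) ^ 2 = 0 := by linear_combination h + (b^2 - a*b)*h2
  have := pow_eq_zero_iff (n := 2) (by norm_num) |>.mp h0
  exact sub_eq_zero.mp this

lemma sq_surj (a : F) : ∃ b : F, b ^ 2 = a := by
  have hinj : Function.Injective (fun x : F => x ^ 2) := fun x y h => sq_inj h2 h
  obtain ⟨b, hb⟩ := (Finite.injective_iff_surjective.mp hinj) a
  exact ⟨b, hb⟩

lemma q1 {x y : F} (hx : ∃ s : F, s^2 + s = x) (hy : ∃ s : F, s^2 + s = y) :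
    ∃ s : F, s^2 + s = x + y := by
  obtain ⟨s, hs⟩ := hx; obtain ⟨r, hr⟩ := hy
  exact ⟨s + r, by linear_combination hs + hr + s*r*h2⟩

lemma q2 {x y : F} (hx : ∃ s : F, s^2 + s = x) (hy : ¬ ∃ s : F, s^2 + s = y) :
    ¬ ∃ s : F, s^2 + s = x + y := by
  intro hxy
  obtain ⟨s, hs⟩ := q1 h2 hx hxy
  exact hy ⟨s, by linear_combination hs + x*h2⟩

lemma qsq {x : F} : (∃ s : F, s^2 + s = x^2) ↔ (∃ s : F, s^2 + s = x) := by
  constructor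
  · rintro ⟨s, hs⟩
    obtain ⟨r, hr⟩ := sq_surj h2 s
    exact ⟨r, sq_inj h2 (by linear_combination hs + (r^2+s+1)*hr + r^3*h2)⟩
  · rintro ⟨s, hs⟩
    exact ⟨s^2, by linear_combination (s^2+s+x)*hs + (-s^3)*h2⟩




lemma qfinset : ∃ Qf : Finset F, (∀ a, a ∈ Qf ↔ ∃ s : F, s^2 + s = a) ∧
    2 * Qf.card = Fintype.card F := by
  classical
  refine ⟨univ.image (fun x : F => x^2 + x), ?_, ?_⟩
  · intro a; simp [eq_comm]
  · have hsum := Finset.card_eq_sum_card_image (fun x : F => x^2 + x) univ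
    have hfib : ∀ b ∈ univ.image (fun x : F => x^2 + x),
        (univ.filter (fun a : F => a^2 + a = b)).card = 2 := by
      intro b hb
      obtain ⟨x, -, hx⟩ := Finset.mem_image.mp hb
      have hne : x ∉ ({x + 1} : Finset F) := by
        simp only [Finset.mem_singleton]
        intro h
        exact one_ne_zero (left_eq_add.mp h)
      have hset : univ.filter (fun a : F => a^2 + a = b) = {x, x + 1} := by
        ext a
        simp only [Finset.mem_filter, Finset.mem_univ, true_and, Finset.mem_insert,
          Finset.mem_singleton]
        constructor
        · intro ha
          have hfac : (a - x) * (a + x + 1) = 0 := by linear_combination ha - hx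
          rcases mul_eq_zero.mp hfac with h | h
          · exact Or.inl (sub_eq_zero.mp h)
          · exact Or.inr (by linear_combination h - (x+1)*h2)
        · rintro (rfl | rfl)
          · exact hx
          · linear_combination hx + (x+1)*h2
      rw [hset, Finset.card_insert_of_notMem hne, Finset.card_singleton]
    rw [Finset.sum_congr rfl hfib, Finset.sum_const, smul_eq_mul, Finset.card_univ] at hsum
    omega

lemma q3 {x y : F} (hx : ¬ ∃ s : F, s^2 + s = x) (hy : ¬ ∃ s : F, s^2 + s = y) :
    ∃ s : F, s^2 + s = x + y := by
  classical
  obtain ⟨Qf, hmem, hcard⟩ := qfinset h2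
  have hsub : Qf.image (fun v => x + v) ⊆ Qfᶜ := by
    intro w hw
    obtain ⟨v, hv, rfl⟩ := Finset.mem_image.mp hw
    rw [Finset.mem_compl]
    intro hmem2
    apply hx
    obtain ⟨s, hs⟩ := (hmem _).mp hmem2
    obtain ⟨r, hr⟩ := (hmem _).mp hv
    exact ⟨s + r, by linear_combination hs + hr + (s*r + v)*h2⟩
  have hcardim : (Qf.image (fun v => x + v)).card = Qf.card :=
    Finset.card_image_of_injective _ (add_right_injective x)
  have hcc : Qfᶜ.card = Fintype.card F - Qf.card := Finset.card_compl Qf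
  have heq : Qf.image (fun v => x + v) = Qfᶜ := by
    apply Finset.eq_of_subset_of_card_le hsub
    omega
  have hy' : y ∈ Qfᶜ := Finset.mem_compl.mpr (fun hc => hy ((hmem _).mp hc))
  rw [← heq] at hy'
  obtain ⟨v, hv, hxy⟩ := Finset.mem_image.mp hy'
  obtain ⟨s, hs⟩ := (hmem _).mp hv
  exact ⟨s, by linear_combination hs + hxy - x*h2⟩




lemma pigeon {β : F} (hβ : β ≠ 0) :
    ∃ u : F, u ≠ 0 ∧ (¬ ∃ s : F, s^2 + s = β * u) ∧ (¬ ∃ s : F, s^2 + s = u⁻¹) := by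
  classical
  obtain ⟨Qf, hmem, hcard⟩ := qfinset h2
  have h0Q : (0 : F) ∈ Qf := (hmem 0).mpr ⟨0, by ring⟩
  set A := Qfᶜ.image (fun v => β⁻¹ * v) with hA
  set B := Qfᶜ.image (fun v => v⁻¹) with hB
  have hcA : A.card = Qfᶜ.card :=
    Finset.card_image_of_injective _ (mul_right_injective₀ (inv_ne_zero hβ))
  have hcB : B.card = Qfᶜ.card := Finset.card_image_of_injective _ inv_injective
  have hcc : Qfᶜ.card = Fintype.card F - Qf.card := Finset.card_compl Qf
  have hAsub : A ⊆ univ.erase 0 := by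
    intro w hw
    obtain ⟨v, hv, rfl⟩ := Finset.mem_image.mp hw
    refine Finset.mem_erase.mpr ⟨?_, Finset.mem_univ _⟩
    intro h
    have hv0 : v ≠ 0 := fun h' => (Finset.mem_compl.mp hv) (h' ▸ h0Q)
    exact hv0 (by simpa [inv_ne_zero hβ, hv0] using h)
  have hBsub : B ⊆ univ.erase 0 := by
    intro w hw
    obtain ⟨v, hv, rfl⟩ := Finset.mem_image.mp hw
    refine Finset.mem_erase.mpr ⟨?_, Finset.mem_univ _⟩
    intro h
    have hv0 : v ≠ 0 := fun h' => (Finset.mem_compl.mp hv) (h' ▸ h0Q)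
    exact hv0 (inv_eq_zero.mp h)
  have hunion : (A ∪ B).card ≤ Fintype.card F - 1 := by
    have := Finset.card_le_card (Finset.union_subset hAsub hBsub)
    simpa [Finset.card_erase_of_mem, Finset.card_univ] using this
  have hiu := Finset.card_inter_add_card_union A B
  have hq1 : 1 ≤ Fintype.card F := Fintype.card_pos
  have hQle : Qf.card ≤ Fintype.card F := Finset.card_le_card (Finset.subset_univ _)
  have hne : (A ∩ B).Nonempty := by
    rw [← Finset.card_pos]
    omega
  obtain ⟨u, hu⟩ := hne
  have huA : u ∈ A := Finset.mem_of_mem_inter_left hu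
  have huB : u ∈ B := Finset.mem_of_mem_inter_right hu
  obtain ⟨v, hv, rfl⟩ := Finset.mem_image.mp huA
  have hv0 : v ≠ 0 := fun h' => (Finset.mem_compl.mp hv) (h' ▸ h0Q)
  refine ⟨β⁻¹ * v, by simp [inv_ne_zero hβ, hv0], ?_, ?_⟩
  · rw [mul_inv_cancel_left₀ hβ]
    exact fun hc => (Finset.mem_compl.mp hv) ((hmem _).mpr hc)
  · obtain ⟨w, hw, hwe⟩ := Finset.mem_image.mp huB
    have hw0 : w ≠ 0 := fun h' => (Finset.mem_compl.mp hw) (h' ▸ h0Q)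
    rw [← hwe, inv_inv]
    exact fun hc => (Finset.mem_compl.mp hw) ((hmem _).mpr hc)

lemma odd_not_q1 (m : ℕ) (hF : Fintype.card F = 2 ^ m) (hodd : Odd m) :
    ¬ ∃ s : F, s^2 + s = 1 := by
  classical
  rintro ⟨x, hx⟩
  have hx0 : x ≠ 0 := by rintro rfl; simp at hx
  have hx1 : x ≠ 1 := by
    rintro rfl
    have : (2 : F) = 1 := by linear_combination hx
    rw [h2] at this; exact one_ne_zero this.symm
  have hx3 : x ^ 3 = 1 := by linear_combination (x - 1) * hx + (x - 1) * h2
  set ux : Fˣ := Units.mk0 x hx0 with hux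
  have hux3 : ux ^ 3 = 1 := by ext; push_cast [hux]; exact hx3
  have hord : orderOf ux ∣ 3 := orderOf_dvd_of_pow_eq_one hux3
  have hordne : orderOf ux ≠ 1 := by
    intro h
    rw [orderOf_eq_one_iff] at h
    apply hx1
    have := congrArg Units.val h
    simpa [hux] using this
  have h3 : orderOf ux = 3 := by
    rcases (Nat.Prime.eq_one_or_self_of_dvd (by norm_num) _ hord) with h | h
    · exact absurd h hordne
    · exact h
  have hdvd : (3 : ℕ) ∣ Fintype.card Fˣ := h3 ▸ orderOf_dvd_card
  classical
  rw [Fintype.card_units, hF] at hdvd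
  obtain ⟨k, hk⟩ := hodd
  have h4k : 4 ^ k % 3 = 1 := by
    rw [Nat.pow_mod]; norm_num
  have hpow : 2 ^ m = 2 * 4 ^ k := by
    rw [hk]; rw [pow_succ, pow_mul]; ring
  have hge : 1 ≤ 2 ^ m := Nat.one_le_two_pow
  omega

lemma even_q1 (m : ℕ) (hm : 0 < m) (hF : Fintype.card F = 2 ^ m) (heven : Even m) :
    ∃ s : F, s^2 + s = 1 := by
  classical
  obtain ⟨k, hk⟩ := heven
  have hk0 : 0 < k := by omega
  have h4k : 4 ^ k % 3 = 1 := by rw [Nat.pow_mod]; norm_num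
  have hpow : 2 ^ m = 4 ^ k := by rw [hk, ← two_mul, pow_mul]; norm_num
  have hge : 4 ≤ 4 ^ k := by
    calc 4 = 4 ^ 1 := by norm_num
    _ ≤ 4 ^ k := Nat.pow_le_pow_right (by norm_num) hk0
  have hdvd : (3 : ℕ) ∣ Fintype.card Fˣ := by
    rw [Fintype.card_units, hF]
    omega
  haveI : Fact (Nat.Prime 3) := ⟨by norm_num⟩
  obtain ⟨u, hu⟩ := exists_prime_orderOf_dvd_card 3 hdvd
  have hu3 : (u : F) ^ 3 = 1 := by
    have := pow_orderOf_eq_one u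
    rw [hu] at this
    have := congrArg Units.val this
    push_cast at this
    exact this
  have hu1 : (u : F) ≠ 1 := by
    intro h
    have : u = 1 := Units.ext h
    rw [this, orderOf_one] at hu
    norm_num at hu
  refine ⟨u, ?_⟩
  have hfac : ((u : F) - 1) * ((u:F)^2 + (u:F) + 1) = 0 := by linear_combination hu3
  rcases mul_eq_zero.mp hfac with h | h
  · exact absurd (sub_eq_zero.mp h) hu1
  · linear_combination h - h2


lemma not_P_one (h1 : ¬ ∃ s : F, s^2 + s = 1) {c t : F} (hc : c ≠ 0)
    (hP : t^4 + t^2 + (c + c^3)*t + c^2 + c^4 = 1) : False := by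
  by_cases hc1 : c = 1
  · subst hc1
    have hsq : (t^2 + t)^2 = 1^2 := by
      linear_combination hP + (-1 - t + t^3)*h2
    exact h1 ⟨t, sq_inj h2 hsq⟩
  · have h1c : (1 : F) + c ≠ 0 := by
      intro h
      apply hc1
      linear_combination -h + c*h2
    have key : (t^2+c*t+c^2)^2 + (t^2+c*t+c^2)*(1+c)^2 = (1+c)^4 := by
      linear_combination hP + (-2*c + c*t^2 + c*t^3 - 3*c^2 + c^2*t + 2*c^2*t^2 - c^3 + c^3*t)*h2
    apply h1
    refine ⟨(t^2+c*t+c^2) / (1+c)^2, ?_⟩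
    field_simp
    linear_combination key

lemma exists_ct (a : F) (ha0 : a ≠ 0) (h1 : (∃ s : F, s^2+s = 1) ∨ a ≠ 1) :
    ∃ c t : F, c ≠ 0 ∧ t^4 + t^2 + (c + c^3)*t + c^2 + c^4 = a := by
  by_cases hQa : ∃ s : F, s^2 + s = a
  · obtain ⟨e, he⟩ := hQa
    obtain ⟨t, ht⟩ := sq_surj h2 e
    refine ⟨1, t, one_ne_zero, ?_⟩
    linear_combination he + (t^2 + e + 1)*ht + (t + 1)*h2
  · have ha1 : a ≠ 1 := by
      rcases h1 with hq | h
      · intro h'; exact hQa (h' ▸ hq)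
      · exact h
    obtain ⟨b, hb⟩ := sq_surj h2 a
    obtain ⟨r, hr⟩ := sq_surj h2 b
    have hQb : ¬ ∃ s : F, s^2 + s = b := by
      intro hq
      exact hQa (hb ▸ (qsq h2).mpr hq)
    have hβ0 : (1 : F) + r ≠ 0 := by
      intro h
      apply ha1
      have hre : r = 1 := by linear_combination -h + r*h2
      rw [← hb, ← hr, hre]; ring
    obtain ⟨u₀, hu₀0, hu₀A, hu₀B⟩ := pigeon h2 hβ0
    have hexu : ∃ u : F, u ≠ 0 ∧ u ≠ 1 ∧ (¬ ∃ s : F, s^2+s = (1+r)*u) ∧ (¬ ∃ s : F, s^2+s = u⁻¹) := by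
      by_cases hu1 : u₀ = 1
      · subst hu1
        rw [mul_one] at hu₀A
        rw [inv_one] at hu₀B
        refine ⟨(1+r)⁻¹, inv_ne_zero hβ0, ?_, ?_, ?_⟩
        · intro h
          apply ha0
          have : (1 : F) + r = 1 := by
            rw [← inv_inv (1+r), h, inv_one]
          have hr0 : r = 0 := by linear_combination this
          rw [← hb, ← hr, hr0]; ring
        · rw [mul_inv_cancel₀ hβ0]; exact hu₀B
        · rw [inv_inv]; exact hu₀A
      · exact ⟨u₀, hu₀0, hu1, hu₀A, hu₀B⟩
    obtain ⟨u, hu0, hu1, huA, huB⟩ := hexu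
    have h1u : (1 : F) + u ≠ 0 := by
      intro h
      apply hu1
      linear_combination -h + u*h2
    set c := u / (1 + u) with hcdef
    have hc0 : c ≠ 0 := div_ne_zero hu0 h1u
    have hcd : c * (1 + u) = u := by
      rw [hcdef]; field_simp
    -- Q(X) where X = b(1+u)^2 + u
    have hstep1 := q3 h2 hQb huA
    have hru : ∃ s : F, s^2 + s = (r*u)^2 + r*u := ⟨r*u, by ring⟩
    obtain ⟨s0, hs0⟩ := q1 h2 hstep1 hru
    have hQX : ∃ s : F, s^2 + s = b*(1+u)^2 + u := by
      refine ⟨s0, ?_⟩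
      linear_combination hs0 + u^2*hr + (r*u - b*u)*h2
    obtain ⟨z, hz⟩ := (qsq h2).mpr hQX
    have hinvu2 : ¬ ∃ s : F, s^2 + s = (u⁻¹)^2 := fun h => huB ((qsq h2).mp h)
    have hcu' : c * u⁻¹ = 2 - (1 + c) := by
      field_simp
      linear_combination hcd
    by_cases hQD : ∃ s : F, s^2 + s = ((1+c)^2*z) * (c⁻¹)^2
    · obtain ⟨s1, hs1⟩ := hQD
      refine ⟨c, c*s1, hc0, ?_⟩
      have hcc : c^2 * (c⁻¹)^2 = 1 := by field_simp
      have hY : (c*s1)^2 + c*(c*s1) = (1+c)^2*z := by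
        linear_combination c^2*hs1 + ((1+c)^2*z)*hcc
      linear_combination (1 + (c*s1)^2 + z - c*(c*s1) + 2*c*z + c^2 + c^2*z)*hY
        + (1 + 4*c + 6*c^2 + 4*c^3 + c^4)*hz
        + (-32 + 15*u - 17*c + 11*c*u - 6*c^2 + 5*c^2*u - c^3 + c^3*u + 14*b - 4*b*u + 30*b*u^2 + 2*b*c + 10*b*c*u + 22*b*c*u^2 + 8*b*c^2*u + 10*b*c^2*u^2 + 2*b*c^3*u + 2*b*c^3*u^2 + 4*b^2 + 18*b^2*u + 28*b^2*u^2 + 15*b^2*u^3 + 6*b^2*c + 22*b^2*c*u + 27*b^2*c*u^2 + 11*b^2*c*u^3 + 4*b^2*c^2 + 13*b^2*c^2*u + 14*b^2*c^2*u^2 + 5*b^2*c^2*u^3 + b^2*c^3 + 3*b^2*c^3*u + 3*b^2*c^3*u^2 + b^2*c^3*u^3)*hcd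
        + hb
        + (-16*u + 8*u^2 + 16*c - c*z - c*z*(c*s1) + 9*c^2 - 2*c^2*z - 2*c^2*z*(c*s1) + 3*c^3 - c^3*z - c^3*z*(c*s1) + c^4 + 8*b*u + 16*b*u^3 - 7*b*c - b*c^2 + 4*b^2*u + 12*b^2*u^2 + 16*b^2*u^3 + 8*b^2*u^4)*h2
    · obtain ⟨s1, hs1⟩ := q3 h2 hQD hinvu2
      refine ⟨c, c*s1, hc0, ?_⟩
      have hcc : c^2 * (c⁻¹)^2 = 1 := by field_simp
      have hY : (c*s1)^2 + c*(c*s1) = (1+c)^2*z + (1+c)^2 := by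
        linear_combination c^2*hs1 + ((1+c)^2*z)*hcc + (c*u⁻¹ + 1 - c)*hcu' + (-2*c)*h2
      linear_combination (2 + (c*s1)^2 + z + 2*c - c*(c*s1) + 2*c*z + 2*c^2 + c^2*z)*hY
        + (1 + 4*c + 6*c^2 + 4*c^3 + c^4)*hz
        + (-32 + 15*u - 17*c + 11*c*u - 6*c^2 + 5*c^2*u - c^3 + c^3*u + 14*b - 4*b*u + 30*b*u^2 + 2*b*c + 10*b*c*u + 22*b*c*u^2 + 8*b*c^2*u + 10*b*c^2*u^2 + 2*b*c^3*u + 2*b*c^3*u^2 + 4*b^2 + 18*b^2*u + 28*b^2*u^2 + 15*b^2*u^3 + 6*b^2*c + 22*b^2*c*u + 27*b^2*c*u^2 + 11*b^2*c*u^3 + 4*b^2*c^2 + 13*b^2*c^2*u + 14*b^2*c^2*u^2 + 5*b^2*c^2*u^3 + b^2*c^3 + 3*b^2*c^3*u + 3*b^2*c^3*u^2 + b^2*c^3*u^3)*hcd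
        + hb
        + (1 + z - 16*u + 8*u^2 + 19*c - c*(c*s1) + 3*c*z - c*z*(c*s1) + 13*c^2 - 2*c^2*(c*s1) + 4*c^2*z - 2*c^2*z*(c*s1) + 6*c^3 - c^3*(c*s1) + 3*c^3*z - c^3*z*(c*s1) + 2*c^4 + c^4*z + 8*b*u + 16*b*u^3 - 7*b*c - b*c^2 + 4*b^2*u + 12*b^2*u^2 + 16*b^2*u^3 + 8*b^2*u^4)*h2


end Fside


-- frobenius additivity, self-contained
lemma frob_add {E : Type*} [CommRing E] (h2 : (2 : E) = 0) (k : ℕ) (x y : E) :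
    (x + y) ^ 2 ^ k = x ^ 2 ^ k + y ^ 2 ^ k := by
  induction k with
  | zero => simp
  | succ n ih =>
    rw [pow_succ, pow_mul, pow_mul, pow_mul, ih]
    linear_combination (x ^ 2 ^ n * y ^ 2 ^ n) * h2

lemma fixed_eq_range {F E : Type*} [Field F] [Fintype F] [Field E] [Fintype E] [Algebra F E]
    (q : ℕ) (hq : 2 ≤ q) (hF : Fintype.card F = q) {x : E} (hx : x ^ q = x) :
    ∃ s : F, algebraMap F E s = x := by
  classical
  set A := algebraMap F E with hA
  have hAinj : Function.Injective A := (algebraMap F E).injective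
  set Rf : Finset E := univ.filter (fun x : E => x ^ q = x) with hRf
  have himg : univ.image A ⊆ Rf := by
    intro w hw
    obtain ⟨s, -, rfl⟩ := Finset.mem_image.mp hw
    rw [hRf, Finset.mem_filter]
    refine ⟨Finset.mem_univ _, ?_⟩
    rw [← map_pow]
    congr 1
    rw [← hF]
    exact FiniteField.pow_card s
  have hcardim : (univ.image A).card = q := by
    rw [Finset.card_image_of_injective _ hAinj, Finset.card_univ, hF]
  have hRfcard : Rf.card ≤ q := by
    set p : Polynomial E := Polynomial.X ^ q - Polynomial.X with hp
    have hpne : p ≠ 0 := by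
      intro h
      have hco : p.coeff q = 1 := by
        rw [hp, Polynomial.coeff_sub, Polynomial.coeff_X_pow, if_pos rfl,
          Polynomial.coeff_X, if_neg (by omega)]
        ring
      rw [h] at hco
      simp at hco
    have hdeg : p.natDegree ≤ q := by
      apply le_trans (Polynomial.natDegree_sub_le _ _)
      simp [Polynomial.natDegree_X_pow, Polynomial.natDegree_X]
      omega
    have hsub : Rf ⊆ p.roots.toFinset := by
      intro w hw
      rw [hRf, Finset.mem_filter] at hw
      rw [Multiset.mem_toFinset, Polynomial.mem_roots hpne]
      rw [Polynomial.IsRoot, hp]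
      simp [hw.2]
    calc Rf.card ≤ p.roots.toFinset.card := Finset.card_le_card hsub
      _ ≤ Multiset.card p.roots := Multiset.toFinset_card_le _
      _ ≤ p.natDegree := p.card_roots'
      _ ≤ q := hdeg
  have heq : univ.image A = Rf := by
    apply Finset.eq_of_subset_of_card_le himg
    omega
  have hxRf : x ∈ Rf := by
    rw [hRf, Finset.mem_filter]; exact ⟨Finset.mem_univ _, hx⟩
  rw [← heq] at hxRf
  obtain ⟨s, -, hs⟩ := Finset.mem_image.mp hxRf
  exact ⟨s, hs⟩

theorem stmt_15 (m : ℕ) (hm : 0 < m) (q : ℕ) (hq : q = 2 ^ m)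
    (F E : Type*) [Field F] [Fintype F] [Field E] [Fintype E] [Algebra F E]
    (hF : Fintype.card F = q) (hE : Fintype.card E = q ^ 3)
    (Tr : E → E) (hTr : ∀ X, Tr X = X + X ^ q + X ^ q ^ 2)
    (γ : F) :
    Function.Bijective
        (fun X : E => X +
          algebraMap F E γ * Tr (X ^ (2 * q + 1) + X ^ (4 * q + 1))) ↔
      γ = 0 ∨ (γ = 1 ∧ Odd m) := by
  have hFq : Fintype.card F = 2 ^ m := by rw [hF, hq]
  have hEq : Fintype.card E = 2 ^ (3 * m) := by
    rw [hE, hq, ← pow_mul, mul_comm]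
  have h2F : (2 : F) = 0 := two_eq_zero m hm hFq
  have h2E : (2 : E) = 0 := two_eq_zero (3 * m) (by omega) hEq
  have hq2 : 2 ≤ q := by
    rw [hq]
    calc 2 = 2 ^ 1 := (pow_one 2).symm
    _ ≤ 2 ^ m := Nat.pow_le_pow_right (by norm_num) hm
  set A := algebraMap F E with hA
  have hAinj : Function.Injective A := (algebraMap F E).injective
  have hsF : ∀ s : F, s ^ q = s := fun s => by rw [← hF]; exact FiniteField.pow_card s
  have hfrq : ∀ x y : E, (x + y) ^ q = x ^ q + y ^ q := fun x y => by
    rw [hq]; exact frob_add h2E m x y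
  have hq2pow : ∀ x : E, x ^ q ^ 2 = (x ^ q) ^ q := fun x => by
    rw [← pow_mul, pow_two]
  have hpowq : ∀ (z : E) (k : ℕ), (z ^ k) ^ q = (z ^ q) ^ k := fun z k => by
    rw [← pow_mul, ← pow_mul, mul_comm]
  have hEpow : ∀ x : E, ((x ^ q) ^ q) ^ q = x := fun x => by
    rw [← pow_mul, ← pow_mul]
    have : q * (q * q) = q ^ 3 := by ring
    rw [this, ← hE]
    exact FiniteField.pow_card x
  have hTrq : ∀ z : E, (Tr z) ^ q = Tr z := by
    intro z
    rw [hTr, hq2pow, hfrq, hfrq, hEpow]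
    ring
  have hTrA : ∀ v : F, Tr (A v) = A v := by
    intro v
    have h1 : (A v) ^ q = A v := by rw [← map_pow, hsF]
    rw [hTr, hq2pow, h1, h1]
    linear_combination (A v) * h2E
  constructor
  · intro hbij
    by_contra hcon
    push_neg at hcon
    obtain ⟨hγ0, hγ1⟩ := hcon
    have hγa : γ * γ⁻¹ = 1 := mul_inv_cancel₀ hγ0
    have h1 : (∃ s : F, s^2 + s = 1) ∨ γ⁻¹ ≠ 1 := by
      by_cases hg1 : γ = 1
      · exact Or.inl (even_q1 h2F m hm hFq (Nat.not_odd_iff_even.mp (hγ1 hg1)))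
      · exact Or.inr (fun h => hg1 (by rw [← inv_inv γ, h, inv_one]))
    obtain ⟨c, t, hc, hP⟩ := exists_ct h2F γ⁻¹ (inv_ne_zero hγ0) h1
    have hfA : ∀ s : F, (A s) + A γ * Tr ((A s) ^ (2*q+1) + (A s) ^ (4*q+1))
        = A (s + γ * (s^3 + s^5)) := by
      intro s
      have hps : ∀ k : ℕ, (A s) ^ (k*q+1) = A (s^(k+1)) := by
        intro k
        have h1 : (A s)^(k*q+1) = ((A s)^k)^q * A s := by rw [pow_succ, pow_mul]
        rw [h1, ← map_pow, ← map_pow, hsF, ← map_mul, ← pow_succ]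
      have e1 : (A s) ^ (2*q+1) = A (s^3) := hps 2
      have e2 : (A s) ^ (4*q+1) = A (s^5) := hps 4
      rw [e1, e2, ← map_add, hTrA, ← map_mul, ← map_add]
    have hcoll : A t = A (t + c) := by
      apply hbij.injective
      show (A t) + A γ * Tr ((A t)^(2*q+1) + (A t)^(4*q+1))
          = (A (t+c)) + A γ * Tr ((A (t+c))^(2*q+1) + (A (t+c))^(4*q+1))
      rw [hfA t, hfA (t+c)]
      congr 1
      linear_combination (-5*γ*c)*hP + (-5*c)*hγa
        + (-3*c + γ*c*t^2 + γ*c^2*t - 5*γ*c^2*t^3 + 2*γ*c^3 - 5*γ*c^3*t^2 + 2*γ*c^5)*h2F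
    have := hAinj hcoll
    exact hc (left_eq_add.mp this)
  · rintro (rfl | ⟨rfl, hodd⟩)
    · have : (fun X : E => X + A (0:F) * Tr (X ^ (2*q+1) + X ^ (4*q+1))) = id := by
        funext X
        simp [map_zero]
      rw [this]
      exact Function.bijective_id
    · rw [← Finite.injective_iff_bijective]
      intro x y hxy
      simp only [map_one, one_mul] at hxy
      by_contra hne
      obtain ⟨d, hdd⟩ : ∃ d : E, d = x - y := ⟨_, rfl⟩
      have hd0 : d ≠ 0 := by rw [hdd]; exact sub_ne_zero.mpr hne
      have hx : x = y + d := by rw [hdd]; ring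
      have hdTr : d = Tr (y^(2*q+1) + y^(4*q+1)) + Tr (x^(2*q+1) + x^(4*q+1)) := by
        linear_combination hdd + hxy - (Tr (x^(2*q+1) + x^(4*q+1)))*h2E
      have hdq : d ^ q = d := by
        rw [hdTr, hfrq, hTrq, hTrq]
      have hTradd : ∀ z w : E, Tr (z + w) = Tr z + Tr w := by
        intro z w
        rw [hTr, hTr, hTr, hq2pow, hq2pow, hq2pow, hfrq, hfrq]
        ring
      obtain ⟨u, hu⟩ : ∃ u : E, u = y ^ q := ⟨_, rfl⟩
      obtain ⟨v, hv⟩ : ∃ v : E, v = u ^ q := ⟨_, rfl⟩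
      obtain ⟨τ, hτ⟩ : ∃ τ : E, τ = y + u + v := ⟨_, rfl⟩
      have hvq : v ^ q = y := by rw [hv, hu]; exact hEpow y
      have hτq : τ ^ q = τ := by rw [hτ, hfrq, hfrq, hvq, ← hu, ← hv]; ring
      have hxq : x ^ q = u + d := by rw [hx, hfrq, hdq, ← hu]
      have hpow21 : ∀ z : E, z ^ (2*q+1) = (z^q)^2 * z := by
        intro z
        rw [pow_succ, pow_mul, hpowq]
      have hpow41 : ∀ z : E, z ^ (4*q+1) = (z^q)^4 * z := by
        intro z
        rw [pow_succ, pow_mul, hpowq]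
      have hmq : ∀ (a b : E) (k : ℕ), (a^k*b)^q = (a^q)^k * b^q := by
        intro a b k
        rw [mul_pow, hpowq]
      obtain ⟨W, hWd⟩ : ∃ W : E, W = u^2*d + d^2*y + d^3 + u^4*d + d^4*y + d^5 := ⟨_, rfl⟩
      have hwsum : y^(2*q+1) + y^(4*q+1) + (x^(2*q+1) + x^(4*q+1)) = W := by
        rw [hpow21 x, hpow41 x, hpow21 y, hpow41 y, hxq, hx, ← hu, hWd]
        linear_combination (u*d^2 + 2*u*d^4 + u*y*d + 2*u*y*d^3 + 3*u^2*d^3 + u^2*y + 3*u^2*y*d^2 + 2*u^3*d^2 + 2*u^3*y*d + u^4*y)*h2E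
      have hWq : W^q = v^2*d + d^2*u + d^3 + v^4*d + d^4*u + d^5 := by
        rw [hWd, hfrq, hfrq, hfrq, hfrq, hfrq, hmq u d 2, hmq d y 2, hpowq d 3,
          hmq u d 4, hmq d y 4, hpowq d 5, hdq, ← hu, ← hv]
      have hWqq : (W^q)^q = y^2*d + d^2*v + d^3 + y^4*d + d^4*v + d^5 := by
        rw [hWq, hfrq, hfrq, hfrq, hfrq, hfrq, hmq v d 2, hmq d u 2, hpowq d 3,
          hmq v d 4, hmq d u 4, hpowq d 5, hdq, hvq, ← hv]
      have hTrW : Tr W = d*τ^2 + d^2*τ + d^3 + d*τ^4 + d^4*τ + d^5 := by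
        rw [hTr, hq2pow, hWqq, hWq, hWd, hτ]
        linear_combination (d^3 + d^5 - u*v*d - 2*u*v^3*d - 3*u^2*v^2*d - 2*u^3*v*d - y*v*d - 2*y*v^3*d - y*u*d - 6*y*u*v^2*d - 6*y*u^2*v*d - 2*y*u^3*d - 3*y^2*v^2*d - 6*y^2*u*v*d - 3*y^2*u^2*d - 2*y^3*v*d - 2*y^3*u*d)*h2E
      have hfinal : d = d*τ^2 + d^2*τ + d^3 + d*τ^4 + d^4*τ + d^5 := by
        nth_rewrite 1 [hdTr]
        rw [← hTradd, hwsum, hTrW]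
      obtain ⟨cF, hcF⟩ := fixed_eq_range q hq2 hF hdq
      obtain ⟨tF, htF⟩ := fixed_eq_range q hq2 hF hτq
      have hc0 : cF ≠ 0 := by
        rintro rfl
        rw [map_zero] at hcF
        exact hd0 hcF.symm
      have hFeq : cF = cF*tF^2 + cF^2*tF + cF^3 + cF*tF^4 + cF^4*tF + cF^5 := by
        apply hAinj
        simp only [map_add, map_mul, map_pow, hcF, htF]
        rw [show A cF = d from hcF, show A tF = τ from htF]
        exact hfinal
      have hP1 : tF^4 + tF^2 + (cF+cF^3)*tF + cF^2 + cF^4 = 1 := by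
        apply mul_left_cancel₀ hc0
        linear_combination -hFeq
      exact not_P_one h2F (odd_not_q1 h2F m hFq hodd) hc0 hP1
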